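/- Let n <= q-1, r a positive integer with n = mr + s, 1 <= s <= r, and d >= 2. The code C with parity-check matrix H built from Vandermonde columns (alpha_{ij}, ..., alpha_{ij}^{d-1})^T with pairwise distinct nonzero alpha_{ij}, block-indicator rows, and one appended extra column per block, is a q-ary linear code of length n + ceil(n/r), dimension n - d + 1, minimum distance at least d+1, and locality r. -/

import Mathlib

open Finset

/-- `R` (containing `i`) is a recovery set at coordinate `i` for the code `C`. -/
def IsRecoverySet {F : Type*} [Field F] {ι : Type*} [Fintype ι]
    (C : Submodule F (ι → F)) (i : ι) (R : Finset ι) : Prop :=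
  i ∈ R ∧ ∀ u ∈ C, ∀ v ∈ C, (∀ j ∈ R, j ≠ i → u j = v j) → u i = v i

/-- `C` has locality `r`: every coordinate has a recovery set of size at most `r+1`. -/
def HasLocality {F : Type*} [Field F] {ι : Type*} [Fintype ι]
    (C : Submodule F (ι → F)) (r : ℕ) : Prop :=
  ∀ i : ι, ∃ R : Finset ι, R.card ≤ r + 1 ∧ IsRecoverySet C i R

/-- Every nonzero codeword of `C` has Hamming weight at least `d`. -/
def DistAtLeast {F : Type*} [Field F] [DecidableEq F] {ι : Type*} [Fintype ι]
    (C : Submodule F (ι → F)) (d : ℕ) : Prop :=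
  ∀ c ∈ C, c ≠ 0 → d ≤ hammingNorm c

/-- `C` has minimum distance exactly `d`. -/
def IsMinDist {F : Type*} [Field F] [DecidableEq F] {ι : Type*} [Fintype ι]
    (C : Submodule F (ι → F)) (d : ℕ) : Prop :=
  (∃ c ∈ C, c ≠ 0 ∧ hammingNorm c = d) ∧ DistAtLeast C d

/-- The lengthened matrix `H` of Equation (5): columns of `H0` are grouped into `b` consecutive
blocks of size at most `r` (column `j` lies in block `j / r`); on top we add one indicator row
per block (equal to `1` on the columns of that block and on the appended extra column of that
block, `0` elsewhere), and for each block we append one extra column whose `H0`-part is zero. -/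
def lengthenMatrix {F : Type*} [Field F] {m n : ℕ} (H0 : Matrix (Fin m) (Fin n) F)
    (r b : ℕ) : Matrix (Fin b ⊕ Fin m) (Fin n ⊕ Fin b) F :=
  fun x y =>
    match x, y with
    | Sum.inl i, Sum.inl j => if (j : ℕ) / r = (i : ℕ) then 1 else 0
    | Sum.inl i, Sum.inr i' => if i = i' then 1 else 0
    | Sum.inr i, Sum.inl j => H0 i j
    | Sum.inr _, Sum.inr _ => 0

section Aux

open Polynomial

/-- Key Vandermonde-type vanishing lemma, proved with an interpolation polynomial. -/
lemma key_vanish {F : Type*} [Field F] [DecidableEq F] {n : ℕ} (α : Fin n → F)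
    (hinj : Function.Injective α) (N o : ℕ) (hα : ∀ j, α j ^ o ≠ 0) (c : Fin n → F)
    (heq : ∀ t : ℕ, o ≤ t → t ≤ N → ∑ j, c j * α j ^ t = 0)
    (hcard : (univ.filter fun j => c j ≠ 0).card + o ≤ N + 1) :
    c = 0 := by
  funext j0
  rw [Pi.zero_apply]
  by_contra hj0
  set T : Finset (Fin n) := univ.filter fun j => c j ≠ 0 with hT
  have hj0T : j0 ∈ T := by simp [hT, hj0]
  set P : F[X] := ∏ j ∈ T.erase j0, (X - C (α j)) with hP
  set Q : F[X] := P * X ^ o with hQ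
  have hPmonic : P.Monic := monic_prod_of_monic _ _ fun j _ => monic_X_sub_C (α j)
  have hPdeg : P.natDegree = (T.erase j0).card := by
    rw [hP, natDegree_prod _ _ fun j _ => X_sub_C_ne_zero (α j)]
    simp
  have hQdeg : Q.natDegree < N + 1 := by
    rw [hQ, natDegree_mul hPmonic.ne_zero (pow_ne_zero _ X_ne_zero), hPdeg, natDegree_X_pow]
    have h1 : (T.erase j0).card = T.card - 1 := Finset.card_erase_of_mem hj0T
    have h2 : 1 ≤ T.card := Finset.card_pos.mpr ⟨j0, hj0T⟩
    omega
  have hsum : ∑ j, c j * Q.eval (α j) = 0 := by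
    have hrw : ∀ j, c j * Q.eval (α j)
        = ∑ t ∈ Finset.range (N + 1), Q.coeff t * (c j * α j ^ t) := by
      intro j
      rw [eval_eq_sum_range' hQdeg, Finset.mul_sum]
      exact Finset.sum_congr rfl fun t _ => by ring
    simp only [hrw]
    rw [Finset.sum_comm]
    refine Finset.sum_eq_zero fun t ht => ?_
    rcases lt_or_ge t o with hto | hto
    · have : Q.coeff t = 0 := by
        rw [hQ, coeff_mul_X_pow']
        simp [Nat.not_le_of_lt hto]
      simp [this]
    · have htN : t ≤ N := by have := Finset.mem_range.mp ht; omega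
      rw [← Finset.mul_sum, heq t hto htN, mul_zero]
  have hsingle : ∑ j, c j * Q.eval (α j) = c j0 * Q.eval (α j0) := by
    refine Finset.sum_eq_single j0 (fun j _ hjne => ?_) (by simp)
    by_cases hcj : c j = 0
    · simp [hcj]
    · have hjT : j ∈ T.erase j0 := by simp [hT, hcj, hjne]
      have : P.eval (α j) = 0 := by
        rw [hP, eval_prod]
        exact Finset.prod_eq_zero hjT (by simp)
      simp [hQ, this]
  have hQne : Q.eval (α j0) ≠ 0 := by
    rw [hQ, eval_mul, eval_pow, eval_X, hP, eval_prod]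
    refine mul_ne_zero (Finset.prod_ne_zero_iff.mpr fun j hj => ?_) (hα j0)
    simp only [eval_sub, eval_X, eval_C, sub_ne_zero]
    exact fun h => (Finset.mem_erase.mp hj).1 (hinj h.symm) |>.elim
  rw [hsum] at hsingle
  exact hj0 ((mul_eq_zero.mp hsingle.symm).resolve_right hQne)

/-- Membership in the kernel of the lengthened matrix. -/
lemma mem_ker_lengthen {F : Type*} [Field F] {m n r b : ℕ}
    (H0 : Matrix (Fin m) (Fin n) F) (c : Fin n ⊕ Fin b → F) :
    c ∈ LinearMap.ker (lengthenMatrix H0 r b).mulVecLin ↔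
      ((∀ t : Fin m, ∑ j, H0 t j * c (Sum.inl j) = 0) ∧
       (∀ i : Fin b, (∑ j ∈ univ.filter fun j : Fin n => (j : ℕ) / r = (i : ℕ),
          c (Sum.inl j)) + c (Sum.inr i) = 0)) := by
  have hL : ∀ i : Fin b, (lengthenMatrix H0 r b).mulVec c (Sum.inl i)
      = (∑ j ∈ univ.filter fun j : Fin n => (j : ℕ) / r = (i : ℕ), c (Sum.inl j))
        + c (Sum.inr i) := by
    intro i
    rw [Matrix.mulVec, dotProduct, Fintype.sum_sum_type]
    congr 1
    · rw [Finset.sum_filter]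
      exact Finset.sum_congr rfl fun j _ => by simp [lengthenMatrix, ite_mul]
    · simp [lengthenMatrix, ite_mul]
  have hR : ∀ t : Fin m, (lengthenMatrix H0 r b).mulVec c (Sum.inr t)
      = ∑ j, H0 t j * c (Sum.inl j) := by
    intro t
    rw [Matrix.mulVec, dotProduct, Fintype.sum_sum_type]
    simp [lengthenMatrix]
  rw [LinearMap.mem_ker, Matrix.mulVecLin_apply, funext_iff]
  constructor
  · intro h
    exact ⟨fun t => by rw [← hR t]; exact h (Sum.inr t),
           fun i => by rw [← hL i]; exact h (Sum.inl i)⟩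
  · rintro ⟨h1, h2⟩ (i | t)
    · rw [Pi.zero_apply, hL i]; exact h2 i
    · rw [Pi.zero_apply, hR t]; exact h1 t

lemma hammingNorm_sum_split {F : Type*} [DecidableEq F] [Zero F]
    {A B : Type*} [Fintype A] [Fintype B] (c : A ⊕ B → F) :
    hammingNorm c = hammingNorm (c ∘ Sum.inl) + hammingNorm (c ∘ Sum.inr) := by
  have h : ({i | c i ≠ 0} : Finset (A ⊕ B))
      = ({a | c (Sum.inl a) ≠ 0} : Finset A).disjSum ({b | c (Sum.inr b) ≠ 0} : Finset B) := by
    ext (a | b) <;> simp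
  simp only [hammingNorm, h, Finset.card_disjSum, Function.comp]

end Aux

/-- with `n ≤ q-1`, `n = mr+s`, `1 ≤ s ≤ r`, `d ≥ 2`, the code `C` whose
parity-check matrix is the lengthened matrix built from the Vandermonde columns
`(α_j, α_j², …, α_j^{d-1})ᵀ` (pairwise distinct nonzero `α_j`), block-indicator rows and one
appended extra column per block, is a `q`-ary linear code of length `n + ⌈n/r⌉`, dimension
`n - d + 1`, minimum distance at least `d + 1`, and locality `r`. -/
theorem vandermonde_lengthened_code_params {q n m s r b d : ℕ}
    {F : Type*} [Field F] [Fintype F] [DecidableEq F] (hcard : Fintype.card F = q)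
    (hnq : n ≤ q - 1) (hd : 2 ≤ d) (hr : 1 ≤ r)
    (hn : n = m * r + s) (hs1 : 1 ≤ s) (hsr : s ≤ r)
    (hb : b = (n + r - 1) / r)
    (α : Fin n → F) (hinj : Function.Injective α) (hne : ∀ j, α j ≠ 0) :
    Module.finrank F (LinearMap.ker
        (lengthenMatrix (fun (t : Fin (d - 1)) (j : Fin n) => α j ^ ((t : ℕ) + 1)) r b).mulVecLin)
      = n + 1 - d ∧
    DistAtLeast (LinearMap.ker
        (lengthenMatrix (fun (t : Fin (d - 1)) (j : Fin n) => α j ^ ((t : ℕ) + 1)) r b).mulVecLin)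
      (d + 1) ∧
    HasLocality (LinearMap.ker
        (lengthenMatrix (fun (t : Fin (d - 1)) (j : Fin n) => α j ^ ((t : ℕ) + 1)) r b).mulVecLin)
      r := by
  classical
  have hr0 : 0 < r := hr
  set V : Matrix (Fin (d - 1)) (Fin n) F :=
    (fun (t : Fin (d - 1)) (j : Fin n) => α j ^ ((t : ℕ) + 1)) with hV
  have hrb : n ≤ b * r := by
    have h1 : (n + r - 1) % r < r := Nat.mod_lt _ hr0
    have h2 : r * b + (n + r - 1) % r = n + r - 1 := by
      rw [hb]; exact Nat.div_add_mod _ _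
    have h3 : b * r = r * b := Nat.mul_comm _ _
    omega
  have hblt : ∀ j : Fin n, (j : ℕ) / r < b := fun j =>
    (Nat.div_lt_iff_lt_mul hr0).mpr (lt_of_lt_of_le j.isLt hrb)
  -- bridging lemma for powers
  have hpow : ∀ x : Fin n → F,
      (∀ t : Fin (d - 1), ∑ j, V t j * x j = 0) →
      ∀ t : ℕ, 1 ≤ t → t ≤ d - 1 → ∑ j, x j * α j ^ t = 0 := by
    intro x hx t ht1 ht2
    have := hx ⟨t - 1, by omega⟩
    simp only [hV] at this
    rw [show t - 1 + 1 = t by omega] at this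
    rw [← this]
    exact Finset.sum_congr rfl fun j _ => mul_comm _ _
  refine ⟨?_, ?_, ?_⟩
  · -- dimension
    have e : LinearMap.ker (lengthenMatrix V r b).mulVecLin ≃ₗ[F]
        LinearMap.ker V.mulVecLin :=
      { toFun := fun c => ⟨fun j => c.1 (Sum.inl j), by
          rw [LinearMap.mem_ker]
          funext t
          simpa [Matrix.mulVecLin_apply, Matrix.mulVec, dotProduct] using
            ((mem_ker_lengthen V c.1).mp c.2).1 t⟩
        map_add' := fun c1 c2 => Subtype.ext (funext fun j => rfl)
        map_smul' := fun a c => Subtype.ext (funext fun j => rfl)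
        invFun := fun y => ⟨Sum.elim y.1
            (fun i => -∑ j ∈ univ.filter fun j : Fin n => (j : ℕ) / r = (i : ℕ), y.1 j), by
          refine (mem_ker_lengthen V _).mpr ⟨fun t => ?_, fun i => ?_⟩
          · have hy := LinearMap.mem_ker.mp y.2
            simp only [Sum.elim_inl]
            exact congrFun hy t
          · simp⟩
        left_inv := by
          rintro ⟨c, hc⟩
          refine Subtype.ext (funext fun x => ?_)
          cases x with
          | inl j => rfl
          | inr i =>
            have h := ((mem_ker_lengthen V c).mp hc).2 i
            show -∑ j ∈ univ.filter fun j : Fin n => (j : ℕ) / r = (i : ℕ), c (Sum.inl j)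
              = c (Sum.inr i)
            linear_combination -h
        right_inv := fun y => Subtype.ext (funext fun j => rfl) }
    rw [LinearEquiv.finrank_eq e]
    rcases le_or_gt (d - 1) n with hdn | hdn
    · -- surjective case
      have hsurj : Function.Surjective V.mulVecLin := by
        intro y
        set em : Fin (d - 1) → Fin n := Fin.castLE hdn with hem
        set β : Fin (d - 1) → F := fun t' => α (em t') with hβ
        have hβinj : Function.Injective β := fun a b h => Fin.castLE_injective _ (hinj h)
        set W : Matrix (Fin (d - 1)) (Fin (d - 1)) F :=
          Matrix.of fun t t' => β t' ^ ((t : ℕ) + 1) with hW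
        have hdet : W.det ≠ 0 := by
          have hWt : W.transpose = Matrix.diagonal β * Matrix.vandermonde β := by
            ext t' t
            rw [Matrix.transpose_apply, Matrix.diagonal_mul, Matrix.vandermonde_apply]
            show β t' ^ ((t : ℕ) + 1) = β t' * β t' ^ (t : ℕ)
            exact pow_succ' _ _
          have hdet2 : W.det = (∏ t', β t') * (Matrix.vandermonde β).det := by
            rw [← Matrix.det_transpose, hWt, Matrix.det_mul, Matrix.det_diagonal]
          rw [hdet2]
          exact mul_ne_zero (Finset.prod_ne_zero_iff.mpr fun t' _ => hne _)
            (Matrix.det_vandermonde_ne_zero_iff.mpr hβinj)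
        have hunit : IsUnit W.det := isUnit_iff_ne_zero.mpr hdet
        set x : Fin (d - 1) → F := W⁻¹.mulVec y with hx
        have hWx : W.mulVec x = y := by
          rw [hx, Matrix.mulVec_mulVec, Matrix.mul_nonsing_inv _ hunit, Matrix.one_mulVec]
        refine ⟨fun j => if h' : (j : ℕ) < d - 1 then x ⟨(j : ℕ), h'⟩ else 0, ?_⟩
        rw [Matrix.mulVecLin_apply]
        funext t
        rw [← hWx]
        show (∑ j, V t j * if h' : (j : ℕ) < d - 1 then x ⟨(j : ℕ), h'⟩ else 0)
          = ∑ t', W t t' * x t'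
        have hmem : ∀ j : Fin n,
            j ∈ (univ : Finset (Fin (d - 1))).map ⟨em, Fin.castLE_injective _⟩
            ↔ (j : ℕ) < d - 1 := by
          intro j
          simp only [Finset.mem_map, Finset.mem_univ, true_and, Function.Embedding.coeFn_mk]
          constructor
          · rintro ⟨t', rfl⟩; exact t'.isLt
          · intro h'; exact ⟨⟨(j : ℕ), h'⟩, Fin.ext rfl⟩
        rw [← Finset.sum_subset (Finset.subset_univ
            ((univ : Finset (Fin (d - 1))).map ⟨em, Fin.castLE_injective _⟩))
          (fun j _ hj => by rw [dif_neg (fun h' => hj ((hmem j).mpr h')), mul_zero])]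
        rw [Finset.sum_map]
        refine Finset.sum_congr rfl fun t' _ => ?_
        simp only [Function.Embedding.coeFn_mk]
        have h' : ((em t' : Fin n) : ℕ) < d - 1 := t'.isLt
        have ht' : (⟨((em t' : Fin n) : ℕ), h'⟩ : Fin (d - 1)) = t' := Fin.ext rfl
        rw [dif_pos h', ht']
        rfl
      have hrank := LinearMap.finrank_range_add_finrank_ker V.mulVecLin
      rw [LinearMap.range_eq_top.mpr hsurj, finrank_top,
        Module.finrank_fintype_fun_eq_card, Module.finrank_fintype_fun_eq_card] at hrank
      simp only [Fintype.card_fin] at hrank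
      omega
    · -- trivial-kernel case
      have hker0 : LinearMap.ker V.mulVecLin = ⊥ := by
        rw [eq_bot_iff]
        intro x hx
        have hx' : ∀ t : Fin (d - 1), ∑ j, V t j * x j = 0 := by
          intro t
          simpa [Matrix.mulVecLin_apply, Matrix.mulVec, dotProduct] using
            congrFun (LinearMap.mem_ker.mp hx) t
        have hxc : (univ.filter fun j => x j ≠ 0).card + 1 ≤ d - 1 + 1 := by
          have h1 : (univ.filter fun j => x j ≠ 0).card ≤ n := by
            simpa using Finset.card_filter_le (univ : Finset (Fin n)) _
          omega
        have := key_vanish α hinj (d - 1) 1 (by simpa using hne) x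
          (fun t ht1 ht2 => hpow x hx' t ht1 ht2) hxc
        simp [this]
      rw [hker0, finrank_bot]
      omega
  · -- distance
    intro c hc hc0
    by_contra hlt
    push_neg at hlt
    obtain ⟨h1, h2⟩ := (mem_ker_lengthen V c).mp hc
    have hsplit := hammingNorm_sum_split c
    have hnormL : hammingNorm (c ∘ Sum.inl)
        = (univ.filter fun j : Fin n => (c ∘ Sum.inl) j ≠ 0).card := rfl
    by_cases hLcase : hammingNorm (c ∘ Sum.inl) ≤ d - 1
    · have hcL : (c ∘ Sum.inl) = 0 := by
        refine key_vanish α hinj (d - 1) 1 (by simpa using hne) _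
          (fun t ht1 ht2 => hpow _ h1 t ht1 ht2) ?_
        rw [← hnormL]; omega
      have hcL' : ∀ j, c (Sum.inl j) = 0 := fun j => congrFun hcL j
      have hcR : ∀ i : Fin b, c (Sum.inr i) = 0 := by
        intro i
        have := h2 i
        rw [Finset.sum_eq_zero (fun j _ => hcL' j), zero_add] at this
        exact this
      exact hc0 (funext fun x => by cases x with
        | inl j => exact hcL' j
        | inr i => exact hcR i)
    · have hdL : d ≤ hammingNorm (c ∘ Sum.inl) := by omega
      have hcR : (c ∘ Sum.inr) = 0 := by
        have : hammingNorm (c ∘ Sum.inr) = 0 := by omega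
        exact hammingNorm_eq_zero.mp this
      have hsum0 : ∑ j, c (Sum.inl j) = 0 := by
        rw [← Finset.sum_fiberwise univ
          (fun j : Fin n => (⟨(j : ℕ) / r, hblt j⟩ : Fin b)) (fun j => c (Sum.inl j))]
        refine Finset.sum_eq_zero fun i _ => ?_
        have hfe : (univ.filter fun j : Fin n => (⟨(j : ℕ) / r, hblt j⟩ : Fin b) = i)
            = (univ.filter fun j : Fin n => (j : ℕ) / r = (i : ℕ)) := by
          ext j; simp [Fin.ext_iff]
        rw [hfe]
        have hcR' : c (Sum.inr i) = 0 := congrFun hcR i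
        have := h2 i
        rw [hcR', add_zero] at this
        exact this
      have hcL : (c ∘ Sum.inl) = 0 := by
        refine key_vanish α hinj (d - 1) 0 (by simp) _ ?_ ?_
        · intro t ht0 ht2
          rcases Nat.eq_zero_or_pos t with rfl | ht1
          · simpa using hsum0
          · exact hpow _ h1 t ht1 ht2
        · rw [← hnormL]; omega
      rw [hcL, hammingNorm_zero] at hdL
      omega
  · -- locality
    intro i
    have hrec : ∀ β : Fin b, ∀ i' ∈ insert (Sum.inr β)
        ((univ.filter fun j : Fin n => (j : ℕ) / r = (β : ℕ)).map
          ⟨Sum.inl, Sum.inl_injective⟩),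
        IsRecoverySet (LinearMap.ker
          (lengthenMatrix V r b).mulVecLin) i'
          (insert (Sum.inr β)
            ((univ.filter fun j : Fin n => (j : ℕ) / r = (β : ℕ)).map
              ⟨Sum.inl, Sum.inl_injective⟩)) := by
      intro β i' hi'
      refine ⟨hi', fun u hu v hv hagree => ?_⟩
      set w : Fin n ⊕ Fin b → F := u - v with hw
      have hwker : w ∈ LinearMap.ker (lengthenMatrix V r b).mulVecLin :=
        sub_mem hu hv
      have hw0 : ∀ x ∈ insert (Sum.inr β)
          ((univ.filter fun j : Fin n => (j : ℕ) / r = (β : ℕ)).map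
            ⟨Sum.inl, Sum.inl_injective⟩), x ≠ i' → w x = 0 := by
        intro x hx hxi
        simp only [hw, Pi.sub_apply, sub_eq_zero]
        exact hagree x hx hxi
      have heq := ((mem_ker_lengthen V w).mp hwker).2 β
      have hgoal : w i' = 0 := by
        rcases Finset.mem_insert.mp hi' with rfl | hmem
        · rw [Finset.sum_eq_zero (fun j hj => hw0 (Sum.inl j)
            (Finset.mem_insert_of_mem (Finset.mem_map_of_mem _ hj)) (by simp)),
            zero_add] at heq
          exact heq
        · obtain ⟨j0, hj0, rfl⟩ := Finset.mem_map.mp hmem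
          have hinr : w (Sum.inr β) = 0 :=
            hw0 (Sum.inr β) (Finset.mem_insert_self _ _) (by simp)
          rw [hinr, add_zero] at heq
          rw [Finset.sum_eq_single_of_mem j0 hj0 (fun j hj hjne => hw0 (Sum.inl j)
            (Finset.mem_insert_of_mem (Finset.mem_map_of_mem _ hj))
            (by simp [hjne]))] at heq
          exact heq
      simpa [hw, sub_eq_zero] using hgoal
    have hcardfil : ∀ β : Fin b,
        (univ.filter fun j : Fin n => (j : ℕ) / r = (β : ℕ)).card ≤ r := by
      intro β
      have := Finset.card_le_card_of_injOn (fun j : Fin n => (j : ℕ) % r)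
        (s := univ.filter fun j : Fin n => (j : ℕ) / r = (β : ℕ))
        (t := Finset.range r)
        (fun j _ => Finset.mem_range.mpr (Nat.mod_lt _ hr0))
        (by
          intro j1 h1 j2 h2 hmod
          simp only [Finset.coe_filter, Set.mem_setOf_eq, Finset.mem_univ, true_and] at h1 h2
          have hmod' : (j1 : ℕ) % r = (j2 : ℕ) % r := hmod
          have hdiv : (j1 : ℕ) / r = (j2 : ℕ) / r := by rw [h1, h2]
          exact Fin.ext (by
            rw [← Nat.div_add_mod (j1 : ℕ) r, ← Nat.div_add_mod (j2 : ℕ) r, hdiv, hmod']))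
      simpa using this
    have hcardR : ∀ β : Fin b, (insert (Sum.inr β : Fin n ⊕ Fin b)
        ((univ.filter fun j : Fin n => (j : ℕ) / r = (β : ℕ)).map
          (⟨Sum.inl, Sum.inl_injective⟩ : Fin n ↪ Fin n ⊕ Fin b))).card ≤ r + 1 := by
      intro β
      refine le_trans (Finset.card_insert_le _ _) ?_
      rw [Finset.card_map]
      exact Nat.add_le_add_right (hcardfil β) 1
    cases i with
    | inl j =>
      refine ⟨_, hcardR ⟨(j : ℕ) / r, hblt j⟩, hrec ⟨(j : ℕ) / r, hblt j⟩ (Sum.inl j) ?_⟩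
      exact Finset.mem_insert_of_mem (Finset.mem_map_of_mem _ (by simp))
    | inr i' =>
      exact ⟨_, hcardR i', hrec i' (Sum.inr i') (Finset.mem_insert_self _ _)⟩
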